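/- Let X be a compact metric space, f : X → X a homeomorphism, and B a real Banach space. Let A : X → (B →L[ℝ] B) be a continuous map with operator norms ‖A(x)‖ ≤ k for all x ∈ X, where 0 ≤ k < 1, and let Q : X → B be continuous. Then there exists a unique continuous map H : X → B satisfying H(x) = A(x)(H(f(x))) + Q(x) for all x ∈ X, and it is given by the uniformly convergent series H(x) = Σ_{m=0}^∞ (A(x) ∘ A(f(x)) ∘ ⋯ ∘ A(f^{m−1}(x)))(Q(f^m(x))) (the m = 0 term being Q(x)). -/

import Mathlib

/-- The `m`-th term of the series defining the unique continuous invariant section: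
`(A x ∘ A (f x) ∘ ⋯ ∘ A (f^(m-1) x)) (Q (f^m x))`, the `m = 0` term being `Q x`. -/
def orbitSeriesTerm {X : Type*} {B : Type*} [NormedAddCommGroup B] [NormedSpace ℝ B]
    (f : X → X) (A : X → B →L[ℝ] B) (Q : X → B) (m : ℕ) (x : X) : B :=
  (((List.range m).map fun j => A (f^[j] x)).prod) (Q (f^[m] x))

lemma orbitSeriesTerm_succ {X : Type*} {B : Type*} [NormedAddCommGroup B] [NormedSpace ℝ B]
    (f : X → X) (A : X → B →L[ℝ] B) (Q : X → B) (m : ℕ) (x : X) :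
    orbitSeriesTerm f A Q (m+1) x = A x (orbitSeriesTerm f A Q m (f x)) := by
  simp only [orbitSeriesTerm, List.range_succ_eq_map, List.map_cons, List.prod_cons,
    List.map_map, Function.comp_def, Function.iterate_succ_apply, Function.iterate_zero_apply,
    ContinuousLinearMap.mul_apply]

/-- Abstract fixed-point statement behind the unique continuous invariant section (5.9):
for a continuous family of operators `A x` with `‖A x‖ ≤ k < 1` and continuous `Q`,
there is a unique continuous `H` with `H x = A x (H (f x)) + Q x`, given by the uniformly
convergent series `H x = ∑ m, (A x ∘ ⋯ ∘ A (f^(m-1) x)) (Q (f^m x))`. -/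
theorem exists_unique_continuous_invariant_section
    {X : Type*} [MetricSpace X] [CompactSpace X] (f : X ≃ₜ X)
    {B : Type*} [NormedAddCommGroup B] [NormedSpace ℝ B] [CompleteSpace B]
    (A : X → B →L[ℝ] B) (hA : Continuous A)
    (k : ℝ) (hk0 : 0 ≤ k) (hk1 : k < 1) (hAk : ∀ x, ‖A x‖ ≤ k)
    (Q : X → B) (hQ : Continuous Q) :
    ∃ H : X → B, Continuous H ∧ (∀ x, H x = A x (H (f x)) + Q x) ∧
      (∀ x, HasSum (fun m => orbitSeriesTerm (⇑f) A Q m x) (H x)) ∧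
      TendstoUniformly
        (fun n x => ∑ m ∈ Finset.range n, orbitSeriesTerm (⇑f) A Q m x) H Filter.atTop ∧
      (∀ H' : X → B, Continuous H' → (∀ x, H' x = A x (H' (f x)) + Q x) → H' = H) := by
  obtain ⟨C, hC⟩ := (isCompact_univ (X := X)).exists_bound_of_continuousOn hQ.norm.continuousOn
  have hC' : ∀ x, ‖Q x‖ ≤ C := fun x => by simpa using hC x (Set.mem_univ x)
  -- term bound
  have hbound : ∀ m x, ‖orbitSeriesTerm (⇑f) A Q m x‖ ≤ k ^ m * C := by
    intro m
    induction m with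
    | zero => intro x; simpa [orbitSeriesTerm] using hC' x
    | succ n ih =>
      intro x
      rw [orbitSeriesTerm_succ]
      calc ‖A x (orbitSeriesTerm (⇑f) A Q n (f x))‖
          ≤ ‖A x‖ * ‖orbitSeriesTerm (⇑f) A Q n (f x)‖ := (A x).le_opNorm _
        _ ≤ k * (k ^ n * C) := by
            apply mul_le_mul (hAk x) (ih (f x)) (norm_nonneg _)
            exact hk0
        _ = k ^ (n+1) * C := by ring
  have hu : Summable (fun m : ℕ => k ^ m * C) :=
    (summable_geometric_of_lt_one hk0 hk1).mul_right C
  have hsummable : ∀ x, Summable fun m => orbitSeriesTerm (⇑f) A Q m x := fun x =>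
    Summable.of_norm_bounded hu (fun m => hbound m x)
  set H : X → B := fun x => ∑' m, orbitSeriesTerm (⇑f) A Q m x with hH
  have hhs : ∀ x, HasSum (fun m => orbitSeriesTerm (⇑f) A Q m x) (H x) := fun x =>
    (hsummable x).hasSum
  have hunif : TendstoUniformly
      (fun n x => ∑ m ∈ Finset.range n, orbitSeriesTerm (⇑f) A Q m x) H Filter.atTop :=
    tendstoUniformly_tsum_nat hu (fun m x => hbound m x)
  -- continuity of each term
  have hterm_cont : ∀ m, Continuous fun x => orbitSeriesTerm (⇑f) A Q m x := by
    intro m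
    induction m with
    | zero => simpa [orbitSeriesTerm] using hQ
    | succ n ih =>
      simp only [orbitSeriesTerm_succ]
      exact hA.clm_apply (ih.comp f.continuous)
  have hHcont : Continuous H :=
    hunif.continuous (Filter.Eventually.frequently (Filter.Eventually.of_forall fun n =>
      continuous_finset_sum _ fun m _ => hterm_cont m))
  have heq : ∀ x, H x = A x (H (f x)) + Q x := by
    intro x
    have h1 : HasSum (fun m => orbitSeriesTerm (⇑f) A Q (m+1) x) (A x (H (f x))) := by
      have := (A x).hasSum (hhs (f x))
      simpa only [orbitSeriesTerm_succ] using this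
    have h2 : HasSum (fun m => orbitSeriesTerm (⇑f) A Q m x)
        (A x (H (f x)) + ∑ i ∈ Finset.range 1, orbitSeriesTerm (⇑f) A Q i x) :=
      (hasSum_nat_add_iff 1).mp h1
    have h3 : (∑ i ∈ Finset.range 1, orbitSeriesTerm (⇑f) A Q i x) = Q x := by
      simp [orbitSeriesTerm]
    rw [h3] at h2
    exact (hhs x).unique h2
  refine ⟨H, hHcont, heq, hhs, hunif, ?_⟩
  intro H' hH'c hH'eq
  set G : X → B := fun x => H' x - H x with hG
  have hGeq : ∀ x, G x = A x (G (f x)) := by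
    intro x
    simp only [hG, hH'eq x, heq x, map_sub]
    abel
  obtain ⟨M, hM⟩ := (isCompact_univ (X := X)).exists_bound_of_continuousOn
    ((hH'c.sub hHcont).norm.continuousOn)
  have hM' : ∀ x, ‖G x‖ ≤ M := fun x => by simpa using hM x (Set.mem_univ x)
  have hGle : ∀ n x, ‖G x‖ ≤ k ^ n * M := by
    intro n
    induction n with
    | zero => intro x; simpa using hM' x
    | succ n ih =>
      intro x
      calc ‖G x‖ = ‖A x (G (f x))‖ := by rw [hGeq x]
        _ ≤ ‖A x‖ * ‖G (f x)‖ := (A x).le_opNorm _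
        _ ≤ k * (k ^ n * M) := mul_le_mul (hAk x) (ih (f x)) (norm_nonneg _) hk0
        _ = k ^ (n+1) * M := by ring
  have hG0 : ∀ x, G x = 0 := by
    intro x
    have htend : Filter.Tendsto (fun n : ℕ => k ^ n * M) Filter.atTop (nhds 0) := by
      simpa using (tendsto_pow_atTop_nhds_zero_of_lt_one hk0 hk1).mul_const M
    have : ‖G x‖ ≤ 0 :=
      ge_of_tendsto htend (Filter.Eventually.of_forall fun n => hGle n x)
    exact norm_le_zero_iff.mp this
  funext x
  have := hG0 x
  simpa [hG, sub_eq_zero] using this
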